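/- Let T and T' be simplicial trees and f : T → T' a surjective simplicial map sending each edge either onto an edge or to a single vertex, and suppose f maps geodesic paths onto geodesic paths (no folding). Let L ⊆ T and L' ⊆ T' be subtrees with f(L) = L' and f⁻¹(L') = L. Then nearest-point projection commutes with f: for every vertex u of T, f(π_L(u)) = π_{L'}(f(u)), where π_L and π_{L'} denote nearest-point projection to L and L' respectively. -/

import Mathlib

/-- In an acyclic graph, every path realizes the distance between its endpoints. -/
lemma aux_path_length_eq_dist {V : Type*} {T : SimpleGraph V} (haT : T.IsAcyclic)
    {a b : V} (p : T.Walk a b) (hp : p.IsPath) : p.length = T.dist a b := by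
  obtain ⟨q, hq, hlen⟩ := p.reachable.exists_path_of_dist
  have : (⟨p, hp⟩ : T.Path a b) = ⟨q, hq⟩ := haT.path_unique _ _
  rw [← hlen]
  exact congrArg SimpleGraph.Walk.length (congrArg Subtype.val this)

/-- For a surjective simplicial no-folding map `f` between trees with `f(L) = L'` and
`f⁻¹(L') = L`, nearest-point projection commutes with `f`: the image of the nearest
point of `L` to `u` is the nearest point of `L'` to `f u`. -/
theorem projection_commutes_with_collapse
    {V V' : Type*} (T : SimpleGraph V) (T' : SimpleGraph V')
    (hcT : T.Connected) (haT : T.IsAcyclic)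
    (hcT' : T'.Connected) (haT' : T'.IsAcyclic)
    (f : V → V') (hsurj : Function.Surjective f)
    (hsimp : ∀ a b : V, T.Adj a b → f a = f b ∨ T'.Adj (f a) (f b))
    (hnofold : ∀ u v x : V, T.dist u x + T.dist x v = T.dist u v →
      T'.dist (f u) (f x) + T'.dist (f x) (f v) = T'.dist (f u) (f v))
    (L : T.Subgraph) (L' : T'.Subgraph)
    (hLc : L.Connected) (hL'c : L'.Connected)
    (him : f '' L.verts = L'.verts) (hpre : f ⁻¹' L'.verts = L.verts)
    (u pu : V) (hpu : pu ∈ L.verts)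
    (hnear : ∀ y ∈ L.verts, T.dist u pu ≤ T.dist u y) :
    f pu ∈ L'.verts ∧ ∀ y ∈ L'.verts, T'.dist (f u) (f pu) ≤ T'.dist (f u) y := by
  classical
  have key : ∀ y ∈ L.verts, T.dist u pu + T.dist pu y = T.dist u y := by
    intro y hy
    obtain ⟨p, hp, hplen⟩ := (hcT u pu).exists_path_of_dist
    obtain ⟨w⟩ := hLc ⟨pu, hpu⟩ ⟨y, hy⟩
    set q : T.Walk pu y := w.toPath.val.map L.hom with hqdef
    have hq : q.IsPath := SimpleGraph.Walk.map_isPath_of_injective SimpleGraph.Subgraph.hom_injective w.toPath.prop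
    have hqsup : ∀ x ∈ q.support, x ∈ L.verts := by
      intro x hx
      have hx : x ∈ (w.toPath.val.map L.hom).support := hx
      rw [SimpleGraph.Walk.support_map] at hx
      obtain ⟨x', _, rfl⟩ := List.mem_map.mp hx
      exact x'.2
    have hqlen : q.length = T.dist pu y := aux_path_length_eq_dist haT q hq
    have hpq : (p.append q).IsPath := by
      rw [SimpleGraph.Walk.isPath_def, SimpleGraph.Walk.support_append]
      refine List.Nodup.append hp.support_nodup hq.support_nodup.tail ?_
      intro x hxp hxq
      have hxq' : x ∈ q.support := List.mem_of_mem_tail hxq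
      have hxL : x ∈ L.verts := hqsup x hxq'
      -- x lies on the geodesic p from u to pu, and x ∈ L, so x = pu
      have h1 : T.dist u x ≤ (p.takeUntil x hxp).length := T.dist_le _
      have h2 : T.dist x pu ≤ (p.dropUntil x hxp).length := T.dist_le _
      have h3 : (p.takeUntil x hxp).length + (p.dropUntil x hxp).length = p.length := by
        rw [← SimpleGraph.Walk.length_append, SimpleGraph.Walk.take_spec]
      have h4 : T.dist u pu ≤ T.dist u x := hnear x hxL
      have h5 : T.dist x pu = 0 := by omega
      have hxpu : x = pu :=
        ((p.dropUntil x hxp).reachable.dist_eq_zero_iff).mp h5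
      subst hxpu
      have : q.support = x :: q.support.tail := q.support_eq_cons
      have := hq.support_nodup
      rw [q.support_eq_cons] at this
      exact (List.nodup_cons.mp this).1 hxq
    have := aux_path_length_eq_dist haT (p.append q) hpq
    rw [SimpleGraph.Walk.length_append, hplen, hqlen] at this
    exact this
  constructor
  · rw [← him]; exact ⟨pu, hpu, rfl⟩
  · intro y' hy'
    rw [← him] at hy'
    obtain ⟨y, hy, rfl⟩ := hy'
    have := hnofold u y pu (key y hy)
    omega
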